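/- Let p be an odd prime, let r ≥ 0 be an integer, let u ∈ F_p and α ∈ F_p^×, let E be a field of characteristic p, and let β ∈ E be an element with β² equal to the image of α in E. Then s_r(u,α) = (-1)^r · 2^r · β^r · P̄_r(u·β^{-1}) in E, where s_r(u,α) is viewed in E via the embedding of F_p. -/

import Mathlib

open Polynomial Finset

private lemma keyPolyA {R : Type*} [CommRing R] (a b : R) (r : ℕ) :
    (((X + C a) ^ 2 - C b) ^ r).coeff r =
      ∑ k ∈ range (r + 1),
        a ^ (2 * k - r) * ((2 * k).choose r : R) * (-b) ^ (r - k) * (r.choose k : R) := by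
  have h : ((X + C a) ^ 2 - C b) ^ r =
      ∑ k ∈ range (r + 1),
        (X + C a) ^ (2 * k) * C ((-b) ^ (r - k) * (r.choose k : R)) := by
    rw [sub_eq_add_neg, ← C_neg, add_pow]
    refine sum_congr rfl fun k hk => ?_
    rw [← pow_mul, C_mul, ← C_pow, C_eq_natCast, mul_assoc]
  rw [h, finset_sum_coeff]
  refine sum_congr rfl fun k hk => ?_
  rw [coeff_mul_C, coeff_X_add_C_pow]
  ring

private lemma keyPolyB {R : Type*} [CommRing R] (a b : R) (r : ℕ) :
    (((X + C a) ^ 2 - C b) ^ r).coeff r =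
      ∑ k ∈ range (r + 1),
        (2 * a) ^ (k - (r - k)) * (k.choose (r - k) : R) * (a ^ 2 - b) ^ (r - k) *
          (r.choose k : R) := by
  have h0 : (X + C a) ^ 2 - C b = X * (X + C (2 * a)) + C (a ^ 2 - b) := by
    rw [C_sub, C_pow, C_mul, map_ofNat]
    ring
  have h : ((X + C a) ^ 2 - C b) ^ r =
      ∑ k ∈ range (r + 1),
        X ^ k * ((X + C (2 * a)) ^ k * C ((a ^ 2 - b) ^ (r - k) * (r.choose k : R))) := by
    rw [h0, add_pow]
    refine sum_congr rfl fun k hk => ?_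
    simp only [mul_pow, C_mul, ← C_pow, ← C_eq_natCast (R := R)]
    ring
  rw [h, finset_sum_coeff]
  refine sum_congr rfl fun k hk => ?_
  rw [coeff_X_pow_mul', if_pos (by simpa using Nat.lt_succ_iff.mp (mem_range.mp hk)),
    coeff_mul_C, coeff_X_add_C_pow]
  ring

private lemma keySum {R : Type*} [CommRing R] (a b : R) (r : ℕ) :
    (∑ j ∈ range (r + 1),
        (r.choose j : R) * ((r - j).choose j : R) * (a ^ 2 - b) ^ j * (2 * a) ^ (r - 2 * j)) =
      ∑ k ∈ range (r + 1),
        (-1 : R) ^ k * (r.choose k : R) * ((2 * r - 2 * k).choose r : R) * a ^ (r - 2 * k) *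
          b ^ k := by
  have hA := keyPolyA a b r
  have hB := keyPolyB a b r
  rw [← Finset.sum_range_reflect] at hA hB
  rw [hB] at hA
  calc
    (∑ j ∈ range (r + 1),
        (r.choose j : R) * ((r - j).choose j : R) * (a ^ 2 - b) ^ j * (2 * a) ^ (r - 2 * j)) =
        ∑ j ∈ range (r + 1),
          (2 * a) ^ (r + 1 - 1 - j - (r - (r + 1 - 1 - j))) *
            ((r + 1 - 1 - j).choose (r - (r + 1 - 1 - j)) : R) *
            (a ^ 2 - b) ^ (r - (r + 1 - 1 - j)) * (r.choose (r + 1 - 1 - j) : R) := by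
      refine sum_congr rfl fun j hj => ?_
      have hj' : j ≤ r := Nat.lt_succ_iff.mp (mem_range.mp hj)
      have e1 : r + 1 - 1 - j = r - j := by omega
      have e2 : r - (r - j) = j := by omega
      have e3 : r - j - j = r - 2 * j := by omega
      rw [e1, e2, e3, Nat.choose_symm hj']
      ring
    _ = ∑ k ∈ range (r + 1),
          a ^ (2 * (r + 1 - 1 - k) - r) * (((2 * (r + 1 - 1 - k)).choose r : ℕ) : R) *
            (-b) ^ (r - (r + 1 - 1 - k)) * (r.choose (r + 1 - 1 - k) : R) := hA
    _ = _ := by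
      refine sum_congr rfl fun k hk => ?_
      have hk' : k ≤ r := Nat.lt_succ_iff.mp (mem_range.mp hk)
      have e1 : r + 1 - 1 - k = r - k := by omega
      have e2 : 2 * (r - k) = 2 * r - 2 * k := by omega
      have e3 : r - (r - k) = k := by omega
      have e4 : Nat.choose r (r - k) = Nat.choose r k := Nat.choose_symm hk'
      rw [e1, e2, e3, e4, neg_pow]
      rcases le_or_gt (2 * k) r with h | h
      · have : 2 * r - 2 * k - r = r - 2 * k := by omega
        rw [this]
        ring
      · have : (2 * r - 2 * k).choose r = 0 := Nat.choose_eq_zero_of_lt (by omega)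
        rw [this]
        push_cast
        ring


/-- The mod-`p` reduction of the `r`-th Legendre polynomial
`P_r(X) = 2^{-r} · Σ_{k=0}^{⌊r/2⌋} (-1)^k · C(r,k) · C(2r-2k, r) · X^{r-2k}`,
defined directly over any field `E` (intended: of odd characteristic). -/
noncomputable def legendreMod (E : Type*) [Field E] (r : ℕ) : E[X] :=
  C (((2 : E) ^ r)⁻¹) * ∑ k ∈ Finset.range (r / 2 + 1),
    C ((-1 : E) ^ k * (r.choose k : E) * (((2 * r - 2 * k).choose r : ℕ) : E)) * X ^ (r - 2 * k)

/-- `s_r(u,α) = (-1)^r · Σ_{i ∈ S_r} (-1)^{(r-i)/2} · C(r,i) · C(r-i,(r-i)/2)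
· (α-u²)^{(r-i)/2} · (2u)^i` where `S_r` is the set of `0 ≤ i ≤ r` of the same parity as `r`. -/
def sCoef (p r : ℕ) (u α : ZMod p) : ZMod p :=
  (-1) ^ r * ∑ i ∈ (Finset.range (r + 1)).filter (fun i => i % 2 = r % 2),
    (-1) ^ ((r - i) / 2) * (r.choose i : ZMod p) * ((r - i).choose ((r - i) / 2) : ZMod p) *
      (α - u ^ 2) ^ ((r - i) / 2) * (2 * u) ^ i

/-- For an odd prime `p`, `r ≥ 0`, `u ∈ F_p`, `α ∈ F_p^×`, a field `E` of characteristic `p`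
and `β ∈ E` with `β² = α`, one has `s_r(u,α) = (-1)^r · 2^r · β^r · P̄_r(u·β⁻¹)` in `E`. -/
theorem sCoef_eq_legendre (p : ℕ) [Fact p.Prime] (hodd : Odd p)
    (r : ℕ) (u α : ZMod p) (hα : α ≠ 0)
    (E : Type*) [Field E] [CharP E p] (β : E)
    (hβ : β ^ 2 = ZMod.castHom dvd_rfl E α) :
    ZMod.castHom dvd_rfl E (sCoef p r u α) =
      (-1) ^ r * 2 ^ r * β ^ r *
        Polynomial.eval (ZMod.castHom dvd_rfl E u * β⁻¹) (legendreMod E r) := by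
  set φ : ZMod p →+* E := ZMod.castHom dvd_rfl E with hφ
  have hαE : φ α ≠ 0 := fun h => hα (φ.injective (by simpa using h))
  have hβ0 : β ≠ 0 := by
    intro h
    rw [h] at hβ
    exact hαE (by simpa using hβ.symm)
  have h2 : (2 : E) ≠ 0 := by
    have hd : ¬ p ∣ 2 := by
      intro h
      have hp2 := (Fact.out : p.Prime).two_le
      have := Nat.le_of_dvd (by norm_num) h
      interval_cases p
      · exact (Nat.not_odd_iff_even.mpr (by norm_num)) hodd
    intro h
    exact hd ((CharP.cast_eq_zero_iff E p 2).mp (by exact_mod_cast h))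
  -- RHS simplification
  have hR : (-1 : E) ^ r * 2 ^ r * β ^ r *
        Polynomial.eval (φ u * β⁻¹) (legendreMod E r) =
      (-1 : E) ^ r * ∑ k ∈ Finset.range (r + 1),
        (-1 : E) ^ k * (r.choose k : E) * ((2 * r - 2 * k).choose r : E) *
          (φ u) ^ (r - 2 * k) * (φ α) ^ k := by
    rw [legendreMod]
    simp only [eval_mul, eval_C, Polynomial.eval_finset_sum, eval_pow, eval_X]
    rw [Finset.mul_sum, Finset.mul_sum, Finset.mul_sum,
      Finset.sum_subset (Finset.range_subset_range.mpr (by omega : r / 2 + 1 ≤ r + 1))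
        (fun k hk hk' => ?_)]
    · refine Finset.sum_congr rfl fun k hk => ?_
      have hkr : k ≤ r := by simpa using Nat.lt_succ_iff.mp (Finset.mem_range.mp hk)
      rcases le_or_gt (2 * k) r with hk2 | hk2
      · have hβr : β ^ r = β ^ (r - 2 * k) * (φ α) ^ k := by
          rw [← hβ, ← pow_mul, ← pow_add]
          congr 1
          omega
        rw [mul_pow, hβr, inv_pow]
        field_simp
      · have hz : (2 * r - 2 * k).choose r = 0 := Nat.choose_eq_zero_of_lt (by omega)
        simp [hz]
    · simp only [Finset.mem_range, not_lt] at hk'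
      have hkr := Nat.lt_succ_iff.mp (Finset.mem_range.mp hk)
      have hz : (2 * r - 2 * k).choose r = 0 := Nat.choose_eq_zero_of_lt (by omega)
      simp [hz]
  rw [hR]
  -- LHS simplification
  rw [sCoef, map_mul, map_sum, map_pow, map_neg, map_one]
  congr 1
  have hL : ∀ i ∈ (Finset.range (r + 1)).filter (fun i => i % 2 = r % 2),
      φ ((-1) ^ ((r - i) / 2) * (r.choose i : ZMod p) * ((r - i).choose ((r - i) / 2) : ZMod p) *
        (α - u ^ 2) ^ ((r - i) / 2) * (2 * u) ^ i) =
      (-1 : E) ^ ((r - i) / 2) * (r.choose i : E) * ((r - i).choose ((r - i) / 2) : E) *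
        (φ α - (φ u) ^ 2) ^ ((r - i) / 2) * (2 * φ u) ^ i := by
    intro i _
    simp only [map_mul, map_pow, map_sub, map_natCast, map_neg, map_one, map_ofNat]
  rw [Finset.sum_congr rfl hL]
  rw [Finset.sum_nbij' (i := fun i => (r - i) / 2) (j := fun m => r - 2 * m)
    (t := Finset.range (r / 2 + 1))
    (g := fun m => (r.choose m : E) * ((r - m).choose m : E) *
      ((φ u) ^ 2 - φ α) ^ m * (2 * φ u) ^ (r - 2 * m))
    ?_ ?_ ?_ ?_ ?_]
  · rw [Finset.sum_subset (Finset.range_subset_range.mpr (by omega : r / 2 + 1 ≤ r + 1))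
      (fun m hm hm' => ?_)]
    · exact keySum (φ u) (φ α) r
    · simp only [Finset.mem_range, not_lt] at hm'
      have hz : (r - m).choose m = 0 := Nat.choose_eq_zero_of_lt (by omega)
      simp [hz]
  · intro i hi
    simp only [Finset.mem_filter, Finset.mem_range] at hi
    simp only [Finset.mem_range]
    omega
  · intro m hm
    simp only [Finset.mem_range] at hm
    simp only [Finset.mem_filter, Finset.mem_range]
    omega
  · intro i hi
    simp only [Finset.mem_filter, Finset.mem_range] at hi
    show r - 2 * ((r - i) / 2) = i
    omega
  · intro m hm
    simp only [Finset.mem_range] at hm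
    show (r - (r - 2 * m)) / 2 = m
    omega
  · intro i hi
    simp only [Finset.mem_filter, Finset.mem_range] at hi
    beta_reduce
    have h2m : 2 * ((r - i) / 2) ≤ r := by omega
    set m := (r - i) / 2 with hm
    have hir : i = r - 2 * m := by omega
    have him : r - i = 2 * m := by omega
    have hc : r.choose i * (r - i).choose m = r.choose m * (r - m).choose m := by
      rw [him, hir]
      rw [show r - 2 * m = r - 2 * m from rfl]
      have := Nat.choose_mul (n := r) (k := 2 * m) (s := m) (by omega)
      rw [← Nat.choose_symm h2m] at this
      rw [show 2 * m - m = m by omega] at this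
      exact this
    have hsgn : ((φ u) ^ 2 - φ α) ^ m = (-1 : E) ^ m * (φ α - (φ u) ^ 2) ^ m := by
      rw [← neg_sub (φ α) ((φ u) ^ 2), neg_pow]
    rw [hsgn, ← hir]
    have hcE : (r.choose i : E) * ((r - i).choose m : E) =
        (r.choose m : E) * ((r - m).choose m : E) := by
      exact_mod_cast congrArg (Nat.cast : ℕ → E) hc
    linear_combination ((-1 : E) ^ m * (φ α - (φ u) ^ 2) ^ m * (2 * φ u) ^ i) * hcE
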